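/- Let $X \in (\mathbb{R}^d)^M$, $Y \in (\mathbb{R}^d)^N$, with discrete measures $\rho_X = \sum_i \alpha_i \delta_{x_i}$, $\mu_Y = \sum_j \beta_j \delta_{y_j}$ ($\alpha, \beta$ strictly positive probability vectors). For $\phi \in \mathbb{R}^M$, define the Laguerre cell $\mathrm{Lag}_i(\phi) = \{y \in \mathbb{R}^d : \langle y, x_i\rangle - \phi_i \geq \langle y, x_j\rangle - \phi_j \ \forall j\}$, and let $S_i \subset \{y_1,\dots,y_N\}$ be the set of points $y$ such that $(x_i, y)$ is in the support of some optimal plan for cost $c(x,y) = -\langle x, y\rangle$ between $\rho_X$ and $\mu_Y$. Then $\phi \in \mathbb{R}^M$ is a maximizer of the semi-discrete dual functional $\phi \mapsto -\langle \phi, \alpha\rangle - \int \phi^*(y)\, d\mu_Y(y)$ (equivalently, is an optimal dual potential) if and only if for all $i, j \in \{1,\dots,M\}$: $\phi_i - \phi_j \leq \inf_{y \in S_i} \langle x_i - x_j, y\rangle$. -/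

import Mathlib

open Finset

/-- The transport polytope `Π(α, β)` of matrices with nonnegative entries and
marginals `α`, `β`. -/
def transportPolytope {M N : ℕ} (α : Fin M → ℝ) (β : Fin N → ℝ) :
    Set (Matrix (Fin M) (Fin N) ℝ) :=
  {γ | (∀ i j, 0 ≤ γ i j) ∧ (∀ j, ∑ i, γ i j = β j) ∧ (∀ i, ∑ j, γ i j = α i)}

/-- An optimal discrete plan for the cost `c(x, y) = -⟨x, y⟩`. -/
def IsOptimalDiscretePlan {d M N : ℕ} (X : Fin M → EuclideanSpace ℝ (Fin d))
    (Y : Fin N → EuclideanSpace ℝ (Fin d)) (α : Fin M → ℝ) (β : Fin N → ℝ)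
    (γ : Matrix (Fin M) (Fin N) ℝ) : Prop :=
  γ ∈ transportPolytope α β ∧
    ∀ γ' ∈ transportPolytope α β,
      ∑ i, ∑ j, γ i j * -((inner ℝ (X i) (Y j) : ℝ))
        ≤ ∑ i, ∑ j, γ' i j * -((inner ℝ (X i) (Y j) : ℝ))

/-- Characterisation of semi-discrete optimal dual vectors: `φ ∈ ℝ^M` maximises the
semi-discrete dual functional iff `φ i - φ i' ≤ ⟨x_i - x_{i'}, y⟩` for every `y ∈ S_i`,
where `S_i` collects points `y_j` paired with `x_i` by some optimal plan. -/

lemma plan_cost_split {M N : ℕ} {α : Fin M → ℝ} {β : Fin N → ℝ}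
    {γ : Matrix (Fin M) (Fin N) ℝ} (hγ : γ ∈ transportPolytope α β)
    (ψ : Fin M → ℝ) (s : Fin N → ℝ) :
    ∑ i, ∑ j, γ i j * -(ψ i + s j) = -(∑ i, α i * ψ i) - ∑ j, β j * s j := by
  obtain ⟨-, hcol, hrow⟩ := hγ
  have h1 : ∑ i, ∑ j, γ i j * -(ψ i + s j)
      = -(∑ i, (∑ j, γ i j) * ψ i) - ∑ j, (∑ i, γ i j) * s j := by
    have hA : ∀ i, ∑ j, γ i j * -(ψ i + s j)
        = -((∑ j, γ i j) * ψ i) + -(∑ j, γ i j * s j) := by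
      intro i
      calc ∑ j, γ i j * -(ψ i + s j)
          = ∑ j, (-(γ i j * ψ i) + -(γ i j * s j)) :=
            Finset.sum_congr rfl fun j _ => by ring
        _ = ∑ j, -(γ i j * ψ i) + ∑ j, -(γ i j * s j) := Finset.sum_add_distrib
        _ = -((∑ j, γ i j) * ψ i) + -(∑ j, γ i j * s j) := by
            rw [Finset.sum_neg_distrib, Finset.sum_neg_distrib, Finset.sum_mul]
    calc ∑ i, ∑ j, γ i j * -(ψ i + s j)
        = ∑ i, (-((∑ j, γ i j) * ψ i) + -(∑ j, γ i j * s j)) :=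
          Finset.sum_congr rfl fun i _ => hA i
      _ = ∑ i, -((∑ j, γ i j) * ψ i) + ∑ i, -(∑ j, γ i j * s j) := Finset.sum_add_distrib
      _ = -(∑ i, (∑ j, γ i j) * ψ i) + -(∑ i, ∑ j, γ i j * s j) := by
          rw [Finset.sum_neg_distrib, Finset.sum_neg_distrib]
      _ = -(∑ i, (∑ j, γ i j) * ψ i) - ∑ j, (∑ i, γ i j) * s j := by
          rw [sub_eq_add_neg]
          congr 2
          rw [Finset.sum_comm]
          exact Finset.sum_congr rfl fun j _ => (Finset.sum_mul ..).symm
  rw [h1]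
  congr 1
  · congr 1; exact Finset.sum_congr rfl fun i _ => by rw [hrow i, mul_comm]
  · exact Finset.sum_congr rfl fun j _ => by rw [hcol j, mul_comm]


variable {d M N : ℕ}

lemma weak_duality (hM : 0 < M) (X : Fin M → EuclideanSpace ℝ (Fin d))
    (Y : Fin N → EuclideanSpace ℝ (Fin d)) {α : Fin M → ℝ} {β : Fin N → ℝ}
    {γ : Matrix (Fin M) (Fin N) ℝ} (hγ : γ ∈ transportPolytope α β)
    (ψ : Fin M → ℝ) :
    -(∑ i, α i * ψ i) - ∑ j, β j * (⨆ i, ((inner ℝ (Y j) (X i) : ℝ) - ψ i))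
      ≤ ∑ i, ∑ j, γ i j * -((inner ℝ (X i) (Y j) : ℝ)) := by
  haveI : Nonempty (Fin M) := Fin.pos_iff_nonempty.mp hM
  set s : Fin N → ℝ := fun j => ⨆ i, ((inner ℝ (Y j) (X i) : ℝ) - ψ i) with hs
  rw [← plan_cost_split hγ ψ s]
  refine Finset.sum_le_sum fun i _ => Finset.sum_le_sum fun j _ => ?_
  refine mul_le_mul_of_nonneg_left ?_ (hγ.1 i j)
  have h1 : (inner ℝ (Y j) (X i) : ℝ) - ψ i ≤ s j := by
    simpa [hs] using le_ciSup (f := fun i' => ((inner ℝ (Y j) (X i') : ℝ) - ψ i'))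
      (Set.Finite.bddAbove (Set.finite_range _)) i
  have h2 : (inner ℝ (Y j) (X i) : ℝ) = inner ℝ (X i) (Y j) := real_inner_comm _ _
  linarith

lemma cost_eq_of_cs (hM : 0 < M) (X : Fin M → EuclideanSpace ℝ (Fin d))
    (Y : Fin N → EuclideanSpace ℝ (Fin d)) {α : Fin M → ℝ} {β : Fin N → ℝ}
    {γ : Matrix (Fin M) (Fin N) ℝ} (hγ : γ ∈ transportPolytope α β)
    (ψ : Fin M → ℝ)
    (h : ∀ i j, 0 < γ i j →
      (⨆ i', ((inner ℝ (Y j) (X i') : ℝ) - ψ i')) = (inner ℝ (Y j) (X i) : ℝ) - ψ i) :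
    ∑ i, ∑ j, γ i j * -((inner ℝ (X i) (Y j) : ℝ))
      = -(∑ i, α i * ψ i) - ∑ j, β j * (⨆ i, ((inner ℝ (Y j) (X i) : ℝ) - ψ i)) := by
  rw [← plan_cost_split hγ ψ (fun j => ⨆ i, ((inner ℝ (Y j) (X i) : ℝ) - ψ i))]
  refine Finset.sum_congr rfl fun i _ => Finset.sum_congr rfl fun j _ => ?_
  rcases (hγ.1 i j).eq_or_lt with h0 | h0
  · rw [← h0]; ring
  · rw [h i j h0, real_inner_comm (Y j) (X i)]; ring_nf

lemma cs_of_eq (hM : 0 < M) (X : Fin M → EuclideanSpace ℝ (Fin d))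
    (Y : Fin N → EuclideanSpace ℝ (Fin d)) {α : Fin M → ℝ} {β : Fin N → ℝ}
    {γ : Matrix (Fin M) (Fin N) ℝ} (hγ : γ ∈ transportPolytope α β)
    (ψ : Fin M → ℝ)
    (heq : ∑ i, ∑ j, γ i j * -((inner ℝ (X i) (Y j) : ℝ))
      = -(∑ i, α i * ψ i) - ∑ j, β j * (⨆ i, ((inner ℝ (Y j) (X i) : ℝ) - ψ i))) :
    ∀ i j, 0 < γ i j →
      (⨆ i', ((inner ℝ (Y j) (X i') : ℝ) - ψ i')) = (inner ℝ (Y j) (X i) : ℝ) - ψ i := by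
  haveI : Nonempty (Fin M) := Fin.pos_iff_nonempty.mp hM
  set s : Fin N → ℝ := fun j => ⨆ i, ((inner ℝ (Y j) (X i) : ℝ) - ψ i) with hs
  have hsle : ∀ j i, (inner ℝ (Y j) (X i) : ℝ) - ψ i ≤ s j := fun j i => by
    simpa [hs] using le_ciSup (f := fun i' => ((inner ℝ (Y j) (X i') : ℝ) - ψ i'))
      (Set.Finite.bddAbove (Set.finite_range _)) i
  have hterm : ∀ i j, 0 ≤ γ i j * ((ψ i + s j) - (inner ℝ (X i) (Y j) : ℝ)) := by
    intro i j
    refine mul_nonneg (hγ.1 i j) ?_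
    have := hsle j i
    have h2 : (inner ℝ (Y j) (X i) : ℝ) = inner ℝ (X i) (Y j) := real_inner_comm _ _
    linarith
  have hsum0 : ∑ i, ∑ j, γ i j * ((ψ i + s j) - (inner ℝ (X i) (Y j) : ℝ)) = 0 := by
    have hsplit := plan_cost_split hγ ψ s
    have hexp : ∀ i j, γ i j * ((ψ i + s j) - (inner ℝ (X i) (Y j) : ℝ))
        = γ i j * -((inner ℝ (X i) (Y j) : ℝ)) - γ i j * -(ψ i + s j) := fun i j => by ring
    calc ∑ i, ∑ j, γ i j * ((ψ i + s j) - (inner ℝ (X i) (Y j) : ℝ))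
        = ∑ i, ∑ j, (γ i j * -((inner ℝ (X i) (Y j) : ℝ)) - γ i j * -(ψ i + s j)) :=
          Finset.sum_congr rfl fun i _ => Finset.sum_congr rfl fun j _ => hexp i j
      _ = (∑ i, ∑ j, γ i j * -((inner ℝ (X i) (Y j) : ℝ)))
            - ∑ i, ∑ j, γ i j * -(ψ i + s j) := by
          rw [← Finset.sum_sub_distrib]
          exact Finset.sum_congr rfl fun i _ => Finset.sum_sub_distrib ..
      _ = 0 := by rw [hsplit, heq]; ring
  intro i j h0
  have h1 : ∀ i ∈ Finset.univ (α := Fin M),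
      (0:ℝ) ≤ ∑ j, γ i j * ((ψ i + s j) - (inner ℝ (X i) (Y j) : ℝ)) := fun i _ =>
    Finset.sum_nonneg fun j _ => hterm i j
  have h2 := (Finset.sum_eq_zero_iff_of_nonneg h1).mp hsum0 i (Finset.mem_univ i)
  have h3 := (Finset.sum_eq_zero_iff_of_nonneg (fun j _ => hterm i j)).mp h2 j (Finset.mem_univ j)
  have h4 : (ψ i + s j) - (inner ℝ (X i) (Y j) : ℝ) = 0 := by
    rcases mul_eq_zero.mp h3 with h | h
    · exact absurd h (ne_of_gt h0)
    · exact h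
  have h5 := hsle j i
  have h6 : (inner ℝ (Y j) (X i) : ℝ) = inner ℝ (X i) (Y j) := real_inner_comm _ _
  have hle : s j ≤ (inner ℝ (Y j) (X i) : ℝ) - ψ i := by linarith
  exact le_antisymm hle (hsle j i)


lemma exists_optimal (X : Fin M → EuclideanSpace ℝ (Fin d))
    (Y : Fin N → EuclideanSpace ℝ (Fin d)) {α : Fin M → ℝ} {β : Fin N → ℝ}
    (hα : ∀ i, 0 < α i) (hβ : ∀ j, 0 < β j)
    (hαs : ∑ i, α i = 1) (hβs : ∑ j, β j = 1) :
    ∃ γ, IsOptimalDiscretePlan X Y α β γ := by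
  have hne : (transportPolytope α β).Nonempty := by
    refine ⟨fun i j => α i * β j, fun i j => (mul_nonneg (hα i).le (hβ j).le), fun j => ?_, fun i => ?_⟩
    · rw [← Finset.sum_mul, hαs, one_mul]
    · rw [← Finset.mul_sum, hβs, mul_one]
  have happly : ∀ (i : Fin M) (j : Fin N),
      Continuous (fun γ : Matrix (Fin M) (Fin N) ℝ => γ i j) := fun i j =>
    (continuous_apply j).comp (continuous_apply i)
  have hclosed : IsClosed (transportPolytope α β) := by
    have h1 : IsClosed {γ : Matrix (Fin M) (Fin N) ℝ | ∀ i j, 0 ≤ γ i j} := by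
      simp only [Set.setOf_forall]
      exact isClosed_iInter fun i => isClosed_iInter fun j =>
        isClosed_le continuous_const (happly i j)
    have h2 : IsClosed {γ : Matrix (Fin M) (Fin N) ℝ | ∀ j, ∑ i, γ i j = β j} := by
      simp only [Set.setOf_forall]
      exact isClosed_iInter fun j => isClosed_eq
        (continuous_finset_sum _ fun i _ => happly i j) continuous_const
    have h3 : IsClosed {γ : Matrix (Fin M) (Fin N) ℝ | ∀ i, ∑ j, γ i j = α i} := by
      simp only [Set.setOf_forall]
      exact isClosed_iInter fun i => isClosed_eq
        (continuous_finset_sum _ fun j _ => happly i j) continuous_const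
    have : transportPolytope α β = {γ : Matrix (Fin M) (Fin N) ℝ | ∀ i j, 0 ≤ γ i j}
        ∩ ({γ : Matrix (Fin M) (Fin N) ℝ | ∀ j, ∑ i, γ i j = β j}
          ∩ {γ : Matrix (Fin M) (Fin N) ℝ | ∀ i, ∑ j, γ i j = α i}) := by
      ext γ; exact ⟨fun ⟨a,b,c⟩ => ⟨a,b,c⟩, fun ⟨a,b,c⟩ => ⟨a,b,c⟩⟩
    rw [this]
    exact h1.inter (h2.inter h3)
  -- boundedness: polytope inside compact box
  have hbox : IsCompact {γ : Matrix (Fin M) (Fin N) ℝ | ∀ i j, γ i j ∈ Set.Icc (0:ℝ) 1} := by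
    have : {γ : Matrix (Fin M) (Fin N) ℝ | ∀ i j, γ i j ∈ Set.Icc (0:ℝ) 1}
        = Set.univ.pi fun _ : Fin M => Set.univ.pi fun _ : Fin N => Set.Icc (0:ℝ) 1 := by
      ext γ
      constructor
      · intro h
        exact Set.mem_univ_pi.mpr fun i => Set.mem_univ_pi.mpr fun j => h i j
      · intro h i j
        exact Set.mem_univ_pi.mp (Set.mem_univ_pi.mp h i) j
    rw [this]
    exact isCompact_univ_pi fun i => isCompact_univ_pi fun j => isCompact_Icc
  have hsub : transportPolytope α β ⊆
      {γ : Matrix (Fin M) (Fin N) ℝ | ∀ i j, γ i j ∈ Set.Icc (0:ℝ) 1} := by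
    rintro γ ⟨hnn, hcol, hrow⟩ 
    intro i j
    refine ⟨hnn i j, ?_⟩
    have h1 : γ i j ≤ ∑ j', γ i j' :=
      Finset.single_le_sum (fun j' _ => hnn i j') (Finset.mem_univ j)
    have h2 : α i ≤ 1 := by
      rw [← hαs]
      exact Finset.single_le_sum (fun i' _ => (hα i').le) (Finset.mem_univ i)
    rw [hrow i] at h1
    linarith
  have hK : IsCompact (transportPolytope α β) := hbox.of_isClosed_subset hclosed hsub
  have hcont : Continuous fun γ : Matrix (Fin M) (Fin N) ℝ =>
      ∑ i, ∑ j, γ i j * -((inner ℝ (X i) (Y j) : ℝ)) := by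
    refine continuous_finset_sum _ fun i _ => continuous_finset_sum _ fun j _ => ?_
    exact (happly i j).mul continuous_const
  obtain ⟨γ, hγmem, hγmin⟩ := hK.exists_isMinOn hne hcont.continuousOn
  exact ⟨γ, hγmem, fun γ' hγ' => hγmin hγ'⟩


-- indicator collapse helpers
lemma ind_sum_left {M : ℕ} (a : Fin M) (P : Prop) [Decidable P] (c : ℝ) :
    ∑ i : Fin M, (if a = i ∧ P then c else 0) = if P then c else 0 := by
  by_cases hP : P
  · simp [hP]
  · simp [hP]

lemma ind_sum_pair {M N : ℕ} (a : Fin M) (b : Fin N) (f : Fin M → Fin N → ℝ) :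
    ∑ i : Fin M, ∑ j : Fin N, (if a = i ∧ b = j then (1:ℝ) else 0) * f i j = f a b := by
  have : ∀ i j, (if a = i ∧ b = j then (1:ℝ) else 0) * f i j
      = if a = i ∧ b = j then f i j else 0 := by
    intro i j; split <;> simp
  simp only [this]
  rw [Finset.sum_eq_single a, Finset.sum_eq_single b]
  · simp
  · intro j _ hj
    have : ¬(a = a ∧ b = j) := fun h => hj h.2.symm
    rw [if_neg this]
  · simp
  · intro i _ hi
    apply Finset.sum_eq_zero
    intro j _
    have : ¬(a = i ∧ b = j) := fun h => hi h.1.symm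
    rw [if_neg this]
  · simp

lemma ind_sum_right {N : ℕ} (b : Fin N) (P : Prop) [Decidable P] (c : ℝ) :
    ∑ j : Fin N, (if P ∧ b = j then c else 0) = if P then c else 0 := by
  by_cases hP : P
  · simp [hP]
  · simp [hP]

lemma cyclical_monotone (X : Fin M → EuclideanSpace ℝ (Fin d))
    (Y : Fin N → EuclideanSpace ℝ (Fin d)) {α : Fin M → ℝ} {β : Fin N → ℝ}
    {γ : Matrix (Fin M) (Fin N) ℝ} (hopt : IsOptimalDiscretePlan X Y α β γ)
    {k : ℕ} (I : Fin k → Fin M) (J : Fin k → Fin N) (σ : Equiv.Perm (Fin k))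
    (hpos : ∀ t, 0 < γ (I t) (J t)) :
    ∑ t, (inner ℝ (X (I t)) (Y (J (σ t))) : ℝ) ≤ ∑ t, (inner ℝ (X (I t)) (Y (J t)) : ℝ) := by
  rcases Nat.eq_zero_or_pos k with hk | hk
  · subst hk; simp
  haveI : Nonempty (Fin k) := Fin.pos_iff_nonempty.mp hk
  set m : ℝ := Finset.univ.inf' Finset.univ_nonempty fun t => γ (I t) (J t) with hm
  have hm0 : 0 < m := by
    rw [hm, Finset.lt_inf'_iff]
    exact fun t _ => hpos t
  set ε : ℝ := m / k with hε
  have hε0 : 0 < ε := div_pos hm0 (by exact_mod_cast hk)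
  have hεk : ε * k = m := div_mul_cancel₀ m (by positivity)
  set A : Fin M → Fin N → ℝ :=
    fun i j => ∑ t, if I t = i ∧ J (σ t) = j then (1:ℝ) else 0 with hA
  set B : Fin M → Fin N → ℝ :=
    fun i j => ∑ t, if I t = i ∧ J t = j then (1:ℝ) else 0 with hB
  set γ' : Matrix (Fin M) (Fin N) ℝ := fun i j => γ i j + ε * (A i j - B i j) with hγ'
  obtain ⟨hnn, hcol, hrow⟩ := hopt.1
  have hA0 : ∀ i j, 0 ≤ A i j := fun i j =>
    Finset.sum_nonneg fun t _ => by split <;> norm_num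
  have hB0 : ∀ i j, 0 ≤ B i j := fun i j =>
    Finset.sum_nonneg fun t _ => by split <;> norm_num
  have hBk : ∀ i j, B i j ≤ k := by
    intro i j
    calc B i j ≤ ∑ _t : Fin k, (1:ℝ) :=
          Finset.sum_le_sum fun t _ => by split <;> norm_num
      _ = k := by simp
  have hmem : γ' ∈ transportPolytope α β := by
    refine ⟨fun i j => ?_, fun j => ?_, fun i => ?_⟩
    · -- nonneg
      by_cases hBz : B i j = 0
      · have : γ' i j = γ i j + ε * A i j := by rw [hγ']; simp [hBz]
        rw [this]
        have h1 : 0 ≤ ε * A i j := mul_nonneg hε0.le (hA0 i j)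
        linarith [hnn i j]
      · have hex : ∃ t, I t = i ∧ J t = j := by
          by_contra hc
          push_neg at hc
          apply hBz
          rw [hB]
          refine Finset.sum_eq_zero fun t _ => ?_
          rw [if_neg]
          intro ⟨h1, h2⟩; exact (hc t h1) h2
        obtain ⟨t, ht1, ht2⟩ := hex
        have hγm : m ≤ γ i j := by
          rw [hm, ← ht1, ← ht2]
          exact Finset.inf'_le _ (Finset.mem_univ t)
        have h1 : ε * B i j ≤ m := by
          calc ε * B i j ≤ ε * k := by
                exact mul_le_mul_of_nonneg_left (hBk i j) hε0.le
            _ = m := hεk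
        have h2 : 0 ≤ ε * A i j := by positivity
        have : γ' i j = γ i j + ε * A i j - ε * B i j := by rw [hγ']; ring
        rw [this]; linarith
    · -- column sums
      have hcolA : ∑ i, A i j = ∑ t, if J (σ t) = j then (1:ℝ) else 0 := by
        rw [hA, Finset.sum_comm]
        exact Finset.sum_congr rfl fun t _ => ind_sum_left (I t) _ 1
      have hcolB : ∑ i, B i j = ∑ t, if J t = j then (1:ℝ) else 0 := by
        rw [hB, Finset.sum_comm]
        exact Finset.sum_congr rfl fun t _ => ind_sum_left (I t) _ 1
      have hσ : ∑ t, (if J (σ t) = j then (1:ℝ) else 0)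
          = ∑ t, if J t = j then (1:ℝ) else 0 :=
        Equiv.sum_comp σ fun t => if J t = j then (1:ℝ) else 0
      have : ∑ i, γ' i j = (∑ i, γ i j) + ε * ((∑ i, A i j) - ∑ i, B i j) := by
        rw [hγ', Finset.sum_add_distrib, ← Finset.mul_sum, Finset.sum_sub_distrib]
      rw [this, hcolA, hcolB, hσ, hcol j]; ring
    · -- row sums
      have hrowA : ∑ j', A i j' = ∑ t, if I t = i then (1:ℝ) else 0 := by
        rw [hA, Finset.sum_comm]
        exact Finset.sum_congr rfl fun t _ => ind_sum_right (J (σ t)) _ 1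
      have hrowB : ∑ j', B i j' = ∑ t, if I t = i then (1:ℝ) else 0 := by
        rw [hB, Finset.sum_comm]
        exact Finset.sum_congr rfl fun t _ => ind_sum_right (J t) _ 1
      have : ∑ j', γ' i j' = (∑ j', γ i j') + ε * ((∑ j', A i j') - ∑ j', B i j') := by
        rw [hγ', Finset.sum_add_distrib, ← Finset.mul_sum, Finset.sum_sub_distrib]
      rw [this, hrowA, hrowB, hrow i]; ring
  have hcost := hopt.2 γ' hmem
  set c : Fin M → Fin N → ℝ := fun i j => -((inner ℝ (X i) (Y j) : ℝ)) with hc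
  have hAc : ∑ i, ∑ j, A i j * c i j = ∑ t, c (I t) (J (σ t)) := by
    have hthis : ∀ i j, A i j * c i j
        = ∑ t, (if I t = i ∧ J (σ t) = j then (1:ℝ) else 0) * c i j := by
      intro i j; rw [hA, Finset.sum_mul]
    calc ∑ i, ∑ j, A i j * c i j
        = ∑ i, ∑ j, ∑ t, (if I t = i ∧ J (σ t) = j then (1:ℝ) else 0) * c i j :=
          Finset.sum_congr rfl fun i _ => Finset.sum_congr rfl fun j _ => hthis i j
      _ = ∑ i, ∑ t, ∑ j, (if I t = i ∧ J (σ t) = j then (1:ℝ) else 0) * c i j :=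
          Finset.sum_congr rfl fun i _ => Finset.sum_comm
      _ = ∑ t, ∑ i, ∑ j, (if I t = i ∧ J (σ t) = j then (1:ℝ) else 0) * c i j :=
          Finset.sum_comm
      _ = ∑ t, c (I t) (J (σ t)) :=
          Finset.sum_congr rfl fun t _ => ind_sum_pair (I t) (J (σ t)) c
  have hBc : ∑ i, ∑ j, B i j * c i j = ∑ t, c (I t) (J t) := by
    have hthis : ∀ i j, B i j * c i j
        = ∑ t, (if I t = i ∧ J t = j then (1:ℝ) else 0) * c i j := by
      intro i j; rw [hB, Finset.sum_mul]
    calc ∑ i, ∑ j, B i j * c i j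
        = ∑ i, ∑ j, ∑ t, (if I t = i ∧ J t = j then (1:ℝ) else 0) * c i j :=
          Finset.sum_congr rfl fun i _ => Finset.sum_congr rfl fun j _ => hthis i j
      _ = ∑ i, ∑ t, ∑ j, (if I t = i ∧ J t = j then (1:ℝ) else 0) * c i j :=
          Finset.sum_congr rfl fun i _ => Finset.sum_comm
      _ = ∑ t, ∑ i, ∑ j, (if I t = i ∧ J t = j then (1:ℝ) else 0) * c i j :=
          Finset.sum_comm
      _ = ∑ t, c (I t) (J t) :=
          Finset.sum_congr rfl fun t _ => ind_sum_pair (I t) (J t) c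
  have hsplit : ∑ i, ∑ j, γ' i j * c i j
      = (∑ i, ∑ j, γ i j * c i j)
        + ε * ((∑ i, ∑ j, A i j * c i j) - ∑ i, ∑ j, B i j * c i j) := by
    have h1 : ∀ i j, γ' i j * c i j
        = γ i j * c i j + (ε * (A i j * c i j) - ε * (B i j * c i j)) := by
      intro i j; rw [hγ']; ring
    calc ∑ i, ∑ j, γ' i j * c i j
        = ∑ i, ∑ j, (γ i j * c i j + (ε * (A i j * c i j) - ε * (B i j * c i j))) :=
          Finset.sum_congr rfl fun i _ => Finset.sum_congr rfl fun j _ => h1 i j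
      _ = ∑ i, (∑ j, γ i j * c i j
            + ((∑ j, ε * (A i j * c i j)) - ∑ j, ε * (B i j * c i j))) :=
          Finset.sum_congr rfl fun i _ => by
            rw [Finset.sum_add_distrib, Finset.sum_sub_distrib]
      _ = (∑ i, ∑ j, γ i j * c i j)
            + ((∑ i, ∑ j, ε * (A i j * c i j)) - ∑ i, ∑ j, ε * (B i j * c i j)) := by
          rw [Finset.sum_add_distrib, Finset.sum_sub_distrib]
      _ = (∑ i, ∑ j, γ i j * c i j)
            + ε * ((∑ i, ∑ j, A i j * c i j) - ∑ i, ∑ j, B i j * c i j) := by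
          simp only [← Finset.mul_sum]; ring
  rw [hsplit, hAc, hBc] at hcost
  have hD : (0:ℝ) ≤ (∑ t, c (I t) (J (σ t))) - ∑ t, c (I t) (J t) := by nlinarith
  have h2 : ∀ t, c (I t) (J t) = -((inner ℝ (X (I t)) (Y (J t)) : ℝ)) := fun t => rfl
  have h3 : ∀ t, c (I t) (J (σ t)) = -((inner ℝ (X (I t)) (Y (J (σ t))) : ℝ)) := fun t => rfl
  have e1 : ∑ t, c (I t) (J (σ t)) = -∑ t, (inner ℝ (X (I t)) (Y (J (σ t))) : ℝ) := by
    rw [← Finset.sum_neg_distrib]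
  have e2 : ∑ t, c (I t) (J t) = -∑ t, (inner ℝ (X (I t)) (Y (J t)) : ℝ) := by
    rw [← Finset.sum_neg_distrib]
  rw [e1, e2] at hD
  linarith


lemma exists_potential {M : ℕ} (hM : 0 < M) (w : Fin M → Fin M → ℝ)
    (hcyc : ∀ (n : ℕ) (v : Fin (n+1) → Fin M),
      0 ≤ (∑ t : Fin n, w (v t.castSucc) (v t.succ)) + w (v (Fin.last n)) (v 0)) :
    ∃ φ : Fin M → ℝ, ∀ u v, φ v ≤ φ u + w u v := by
  haveI : Nonempty (Fin M) := Fin.pos_iff_nonempty.mp hM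
  set T : Fin M → Set ℝ := fun i =>
    {c | ∃ (n : ℕ) (v : Fin (n+1) → Fin M), v (Fin.last n) = i
      ∧ c = ∑ t : Fin n, w (v t.castSucc) (v t.succ)} with hT
  have hne : ∀ i, (T i).Nonempty := by
    intro i
    exact ⟨0, 0, fun _ => i, rfl, by simp⟩
  have hbdd : ∀ i, BddBelow (T i) := by
    intro i
    refine ⟨-(Finset.univ.sup' Finset.univ_nonempty (w i)), ?_⟩
    rintro c ⟨n, v, hend, rfl⟩
    have h1 := hcyc n v
    rw [hend] at h1
    have h2 : w i (v 0) ≤ Finset.univ.sup' Finset.univ_nonempty (w i) :=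
      Finset.le_sup' (w i) (Finset.mem_univ (v 0))
    linarith
  set φ : Fin M → ℝ := fun i => sInf (T i) with hφ
  refine ⟨φ, fun u v => ?_⟩
  have key : ∀ c ∈ T u, φ v ≤ c + w u v := by
    rintro c ⟨n, vv, hend, rfl⟩
    have hmem : (∑ t : Fin n, w (vv t.castSucc) (vv t.succ)) + w u v ∈ T v := by
      refine ⟨n+1, Fin.snoc vv v, ?_, ?_⟩
      · simp [Fin.snoc_last]
      · rw [Fin.sum_univ_castSucc]
        congr 1
        · refine Finset.sum_congr rfl fun s _ => ?_
          rw [Fin.succ_castSucc, Fin.snoc_castSucc, Fin.snoc_castSucc]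
        · rw [Fin.succ_last]
          rw [Fin.snoc_castSucc, Fin.snoc_last, hend]
      -- orientation may need symm
    exact csInf_le (hbdd v) hmem
  have : φ v - w u v ≤ sInf (T u) :=
    le_csInf (hne u) fun c hc => by linarith [key c hc]
  have h2 : sInf (T u) = φ u := rfl
  linarith [this]


lemma exists_strong_potential (hM : 0 < M) (X : Fin M → EuclideanSpace ℝ (Fin d))
    (Y : Fin N → EuclideanSpace ℝ (Fin d)) {α : Fin M → ℝ} {β : Fin N → ℝ}
    {γ : Matrix (Fin M) (Fin N) ℝ} (hα : ∀ i, 0 < α i)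
    (hopt : IsOptimalDiscretePlan X Y α β γ) :
    ∃ ψ : Fin M → ℝ, ∀ a b, ∀ j : Fin N, 0 < γ b j →
      ψ b - ψ a ≤ (inner ℝ (X b) (Y j) : ℝ) - (inner ℝ (X a) (Y j) : ℝ) := by
  classical
  set S : Fin M → Finset (Fin N) := fun b => Finset.univ.filter (fun j => 0 < γ b j) with hS
  have hSne : ∀ b, (S b).Nonempty := by
    intro b
    rw [Finset.filter_nonempty_iff]
    by_contra hc
    push_neg at hc
    have hz : ∀ j, γ b j = 0 := fun j =>
      le_antisymm (hc j (Finset.mem_univ j)) (hopt.1.1 b j)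
    have := hopt.1.2.2 b
    rw [Finset.sum_congr rfl fun j _ => hz j, Finset.sum_const_zero] at this
    exact absurd this.symm (ne_of_gt (hα b))
  set W : Fin M → Fin M → ℝ := fun u v =>
    (S v).inf' (hSne v) fun j => (inner ℝ (X v) (Y j) : ℝ) - (inner ℝ (X u) (Y j) : ℝ) with hW
  have hWle : ∀ u v j, j ∈ S v →
      W u v ≤ (inner ℝ (X v) (Y j) : ℝ) - (inner ℝ (X u) (Y j) : ℝ) := by
    intro u v j hj
    exact Finset.inf'_le _ hj
  have hcyc : ∀ (n : ℕ) (v : Fin (n+1) → Fin M),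
      0 ≤ (∑ t : Fin n, W (v t.castSucc) (v t.succ)) + W (v (Fin.last n)) (v 0) := by
    intro n v
    set pred : Fin (n+1) → Fin (n+1) :=
      fun t => if h : t = 0 then Fin.last n else (t.pred h).castSucc with hpred
    have hpred0 : pred 0 = Fin.last n := by rw [hpred]; simp
    have hpredsucc : ∀ t : Fin n, pred t.succ = t.castSucc := by
      intro t; rw [hpred]; simp [Fin.succ_ne_zero]
    have hjex : ∀ t : Fin (n+1), ∃ j ∈ S (v t),
        W (v (pred t)) (v t) = (inner ℝ (X (v t)) (Y j) : ℝ) - (inner ℝ (X (v (pred t))) (Y j) : ℝ) := by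
      intro t
      exact Finset.exists_mem_eq_inf' (hSne (v t)) _
    choose j hjmem hjval using hjex
    have hpos : ∀ t, 0 < γ (v t) (j t) := by
      intro t
      have := hjmem t
      rw [hS] at this
      exact (Finset.mem_filter.mp this).2
    have E1 : (∑ t : Fin n, W (v t.castSucc) (v t.succ)) + W (v (Fin.last n)) (v 0)
        = ∑ t : Fin (n+1), W (v (pred t)) (v t) := by
      rw [Fin.sum_univ_succ, hpred0, add_comm]
      exact congrArg _ (Finset.sum_congr rfl fun t _ => by rw [hpredsucc t])
    have E2 : ∑ t : Fin (n+1), W (v (pred t)) (v t)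
        = (∑ t, (inner ℝ (X (v t)) (Y (j t)) : ℝ))
          - ∑ t, (inner ℝ (X (v (pred t))) (Y (j t)) : ℝ) := by
      rw [← Finset.sum_sub_distrib]
      exact Finset.sum_congr rfl fun t _ => hjval t
    have hpf : ∀ s : Fin (n+1), pred (finRotate (n+1) s) = s := by
      intro s
      induction s using Fin.lastCases with
      | last => rw [finRotate_last, hpred0]
      | cast u =>
        rw [finRotate_succ_apply, Fin.coeSucc_eq_succ, hpredsucc u]
    have E4 : ∑ t : Fin (n+1), (inner ℝ (X (v (pred t))) (Y (j t)) : ℝ)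
        = ∑ s : Fin (n+1), (inner ℝ (X (v s)) (Y (j (finRotate (n+1) s))) : ℝ) := by
      rw [← Equiv.sum_comp (finRotate (n+1))
        (fun t => (inner ℝ (X (v (pred t))) (Y (j t)) : ℝ))]
      exact Finset.sum_congr rfl fun s _ => by rw [hpf s]
    have E5 := cyclical_monotone X Y hopt (fun t => v t) j (finRotate (n+1)) hpos
    rw [E1, E2, E4]
    linarith
  obtain ⟨ψ, hψ⟩ := exists_potential hM W hcyc
  refine ⟨ψ, fun a b j hj => ?_⟩
  have h1 := hψ a b
  have h2 : W a b ≤ (inner ℝ (X b) (Y j) : ℝ) - (inner ℝ (X a) (Y j) : ℝ) :=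
    hWle a b j (by rw [hS]; exact Finset.mem_filter.mpr ⟨Finset.mem_univ j, hj⟩)
  linarith

/-- Characterisation of semi-discrete optimal dual vectors: `φ ∈ ℝ^M` maximises the
semi-discrete dual functional iff `φ i - φ i' ≤ ⟨x_i - x_{i'}, y⟩` for every `y ∈ S_i`,
where `S_i` collects points `y_j` paired with `x_i` by some optimal plan. -/
theorem semidiscrete_dual_characterisation {d M N : ℕ} (hM : 0 < M) (hN : 0 < N)
    (X : Fin M → EuclideanSpace ℝ (Fin d)) (Y : Fin N → EuclideanSpace ℝ (Fin d))
    (α : Fin M → ℝ) (β : Fin N → ℝ)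
    (hα : ∀ i, 0 < α i) (hβ : ∀ j, 0 < β j)
    (hαs : ∑ i, α i = 1) (hβs : ∑ j, β j = 1)
    (φ : Fin M → ℝ) :
    (∀ φ' : Fin M → ℝ,
        -(∑ i, α i * φ' i) - ∑ j, β j * (⨆ i, ((inner ℝ (Y j) (X i) : ℝ) - φ' i))
          ≤ -(∑ i, α i * φ i) - ∑ j, β j * (⨆ i, ((inner ℝ (Y j) (X i) : ℝ) - φ i)))
      ↔ ∀ i i' : Fin M, ∀ j : Fin N,
          (∃ γ : Matrix (Fin M) (Fin N) ℝ,
            IsOptimalDiscretePlan X Y α β γ ∧ 0 < γ i j) →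
          φ i - φ i' ≤ (inner ℝ (X i - X i') (Y j) : ℝ) := by
  haveI : Nonempty (Fin M) := Fin.pos_iff_nonempty.mp hM
  constructor
  · intro hmax i i' j hex
    obtain ⟨γ, hγopt, hγij⟩ := hex
    obtain ⟨ψ, hψ⟩ := exists_strong_potential hM X Y hα hγopt
    have hcs : ∀ b (j' : Fin N), 0 < γ b j' →
        (⨆ a, ((inner ℝ (Y j') (X a) : ℝ) - ψ a)) = (inner ℝ (Y j') (X b) : ℝ) - ψ b := by
      intro b j' h
      refine le_antisymm (ciSup_le fun a => ?_)
        (le_ciSup (f := fun a => ((inner ℝ (Y j') (X a) : ℝ) - ψ a))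
          (Set.Finite.bddAbove (Set.finite_range _)) b)
      have h1 := hψ a b j' h
      have e1 : (inner ℝ (Y j') (X a) : ℝ) = inner ℝ (X a) (Y j') := real_inner_comm _ _
      have e2 : (inner ℝ (Y j') (X b) : ℝ) = inner ℝ (X b) (Y j') := real_inner_comm _ _
      linarith
    have heqψ := cost_eq_of_cs hM X Y hγopt.1 ψ hcs
    have hwd := weak_duality hM X Y hγopt.1 φ
    have hmaxψ := hmax ψ
    have heqφ : ∑ i, ∑ j, γ i j * -((inner ℝ (X i) (Y j) : ℝ))
        = -(∑ i, α i * φ i) - ∑ j, β j * (⨆ i, ((inner ℝ (Y j) (X i) : ℝ) - φ i)) := by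
      linarith
    have hsup := cs_of_eq hM X Y hγopt.1 φ heqφ i j hγij
    have h2 : (inner ℝ (Y j) (X i') : ℝ) - φ i' ≤ (inner ℝ (Y j) (X i) : ℝ) - φ i := by
      rw [← hsup]
      exact le_ciSup (f := fun a => ((inner ℝ (Y j) (X a) : ℝ) - φ a))
        (Set.Finite.bddAbove (Set.finite_range _)) i'
    have e3 : (inner ℝ (X i - X i') (Y j) : ℝ)
        = (inner ℝ (X i) (Y j) : ℝ) - (inner ℝ (X i') (Y j) : ℝ) := inner_sub_left _ _ _
    have e4 : (inner ℝ (Y j) (X i) : ℝ) = inner ℝ (X i) (Y j) := real_inner_comm _ _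
    have e5 : (inner ℝ (Y j) (X i') : ℝ) = inner ℝ (X i') (Y j) := real_inner_comm _ _
    linarith
  · intro H φ'
    obtain ⟨γ, hγopt⟩ := exists_optimal X Y hα hβ hαs hβs
    have hcs : ∀ b (j' : Fin N), 0 < γ b j' →
        (⨆ a, ((inner ℝ (Y j') (X a) : ℝ) - φ a)) = (inner ℝ (Y j') (X b) : ℝ) - φ b := by
      intro b j' h
      refine le_antisymm (ciSup_le fun a => ?_)
        (le_ciSup (f := fun a => ((inner ℝ (Y j') (X a) : ℝ) - φ a))
          (Set.Finite.bddAbove (Set.finite_range _)) b)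
      have h1 := H b a j' ⟨γ, hγopt, h⟩
      have e3 : (inner ℝ (X b - X a) (Y j') : ℝ)
          = (inner ℝ (X b) (Y j') : ℝ) - (inner ℝ (X a) (Y j') : ℝ) := inner_sub_left _ _ _
      have e4 : (inner ℝ (Y j') (X b) : ℝ) = inner ℝ (X b) (Y j') := real_inner_comm _ _
      have e5 : (inner ℝ (Y j') (X a) : ℝ) = inner ℝ (X a) (Y j') := real_inner_comm _ _
      linarith
    have heq := cost_eq_of_cs hM X Y hγopt.1 φ hcs
    have hwd := weak_duality hM X Y hγopt.1 φ'
    linarith
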